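/- Let $E = \begin{pmatrix} 0 & 0 & 1 \\ 0 & 0 & 0 \\ 0 & 0 & 0 \end{pmatrix} \in M_3(\mathbb{C})$. Then the set of square roots of $E$ is exactly the set of matrices of the form $\begin{pmatrix} 0 & x & y \\ 0 & 0 & x^{-1} \\ 0 & 0 & 0 \end{pmatrix}$ with $x \in \mathbb{C} \setminus \{0\}$ and $y \in \mathbb{C}$; consequently $E^{1/2}$ is homeomorphic to $(\mathbb{C} \setminus \{0\}) \times \mathbb{C}$. -/

import Mathlib

/-- The key set equality. -/
theorem sqrtE_eq :
    {X : Matrix (Fin 3) (Fin 3) ℂ | X ^ 2 = !![0,0,1; 0,0,0; 0,0,0]} =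
      {X : Matrix (Fin 3) (Fin 3) ℂ |
        ∃ x y : ℂ, x ≠ 0 ∧ X = !![0,x,y; 0,0,x⁻¹; 0,0,0]} := by
  ext X
  simp only [Set.mem_setOf_eq]
  constructor
  · intro hX
    have hc : X * !![(0:ℂ),0,1; 0,0,0; 0,0,0] = !![(0:ℂ),0,1; 0,0,0; 0,0,0] * X := by
      rw [← hX, pow_two]; exact (mul_assoc X X X).symm
    have h20 : X 2 0 = 0 := by
      have := congrFun (congrFun hc 0) 0
      simpa [Matrix.mul_apply, Fin.sum_univ_three, Matrix.vecHead, Matrix.vecTail]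
        using this.symm
    have h21 : X 2 1 = 0 := by
      have := congrFun (congrFun hc 0) 1
      simpa [Matrix.mul_apply, Fin.sum_univ_three, Matrix.vecHead, Matrix.vecTail]
        using this.symm
    have h22 : X 2 2 = X 0 0 := by
      have := congrFun (congrFun hc 0) 2
      simpa [Matrix.mul_apply, Fin.sum_univ_three, Matrix.vecHead, Matrix.vecTail]
        using this.symm
    have h10 : X 1 0 = 0 := by
      have := congrFun (congrFun hc 1) 2
      simpa [Matrix.mul_apply, Fin.sum_univ_three, Matrix.vecHead, Matrix.vecTail]
        using this
    have p00 := congrFun (congrFun hX 0) 0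
    have p11 := congrFun (congrFun hX 1) 1
    have p02 := congrFun (congrFun hX 0) 2
    simp [pow_two, Matrix.mul_apply, Fin.sum_univ_three, Matrix.vecHead, Matrix.vecTail,
      h10, h20, h21] at p00 p11 p02
    have hbf : X 0 1 * X 1 2 = 1 := by
      rw [p00] at h22
      simpa [p00, h22] using p02
    have hx : X 0 1 ≠ 0 := left_ne_zero_of_mul_eq_one hbf
    have hf : X 1 2 = (X 0 1)⁻¹ := eq_inv_of_mul_eq_one_right hbf
    refine ⟨X 0 1, X 0 2, hx, ?_⟩
    have h22' : X 2 2 = 0 := by rw [h22, p00]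
    ext i j
    fin_cases i <;> fin_cases j <;>
      simp [Matrix.vecHead, Matrix.vecTail, p00, p11, hf, h10, h20, h21, h22']
  · rintro ⟨x, y, hx, rfl⟩
    ext i j
    fin_cases i <;> fin_cases j <;>
      simp [pow_two, Matrix.mul_apply, Fin.sum_univ_three, Matrix.vecHead, Matrix.vecTail,
        mul_inv_cancel₀ hx]

theorem stmt18 :
    {X : Matrix (Fin 3) (Fin 3) ℂ | X ^ 2 = !![0,0,1; 0,0,0; 0,0,0]} =
      {X : Matrix (Fin 3) (Fin 3) ℂ |
        ∃ x y : ℂ, x ≠ 0 ∧ X = !![0,x,y; 0,0,x⁻¹; 0,0,0]} ∧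
    Nonempty
      (({X : Matrix (Fin 3) (Fin 3) ℂ | X ^ 2 = !![0,0,1; 0,0,0; 0,0,0]} :
          Set (Matrix (Fin 3) (Fin 3) ℂ)) ≃ₜ ({x : ℂ // x ≠ 0} × ℂ)) := by
  refine ⟨sqrtE_eq, ?_⟩
  rw [sqrtE_eq]
  refine ⟨{
    toFun := fun X => (⟨X.1 0 1, ?_⟩, X.1 0 2)
    invFun := fun p => ⟨!![0, p.1.1, p.2; 0,0,(p.1.1)⁻¹; 0,0,0], ⟨p.1.1, p.2, p.1.2, rfl⟩⟩
    left_inv := ?_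
    right_inv := ?_
    continuous_toFun := ?_
    continuous_invFun := ?_ }⟩
  · obtain ⟨x, y, hx, hXe⟩ := X.2
    rw [hXe]; simpa using hx
  · rintro ⟨X, x, y, hx, rfl⟩
    ext i j
    fin_cases i <;> fin_cases j <;> simp [Matrix.vecHead, Matrix.vecTail]
  · rintro ⟨⟨x, hx⟩, y⟩
    simp
  · exact Continuous.prodMk
      (Continuous.subtype_mk (continuous_subtype_val.matrix_elem 0 1) _)
      (continuous_subtype_val.matrix_elem 0 2)
  · apply Continuous.subtype_mk
    apply continuous_matrix
    intro i j
    fin_cases i <;> fin_cases j <;>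
      simp [Matrix.vecHead, Matrix.vecTail] <;>
      first
      | fun_prop
      | exact (continuous_subtype_val.comp continuous_fst).inv₀ fun a => a.1.2
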